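/- Let X, 𝒫, 𝒜, σ be as in the context, let X₁,…,X_k ⊆ C_k be partition sets mapped cyclically onto each other by σ, and refine each as X_i = ⋃_{j=1}^{s} X_{ij} into s nonempty disjoint subsets. Let 𝒜_S be the algebra of functions constant on the sets of the refined partition, and suppose both 𝒜 and 𝒜_S are invariant under σ and σ⁻¹. For a positive integer r let C̃_r := {x ∈ ⋃ᵢXᵢ : r is the smallest positive integer such that x and σʳ(x) lie in one common X_{ij}}. Then the commutants in 𝒜_S⋊_σ̃ℤ satisfy 𝒜_S′ = 𝒜′ \ {Σ_{n} fₙδⁿ ∈ 𝒜′ : fₙ does not vanish identically on C̃_{k·l} for some n and some l with k ∣ n and l ∤ (n/k)}. -/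

import Mathlib

open scoped Classical

noncomputable section

namespace PaperTRS

/-- The algebra of complex valued functions constant on each set of the family `P`. -/
def partAlg {X J : Type*} (P : J → Set X) : Subalgebra ℂ (X → ℂ) where
  carrier := {h | ∀ i, ∀ x ∈ P i, ∀ y ∈ P i, h x = h y}
  mul_mem' := by
    intro a b ha hb i x hx y hy
    simp only [Pi.mul_apply, ha i x hx y hy, hb i x hx y hy]
  add_mem' := by
    intro a b ha hb i x hx y hy
    simp only [Pi.add_apply, ha i x hx y hy, hb i x hx y hy]
  algebraMap_mem' := by intro r i x hx y hy; rfl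

/-- Piecewise constant functions on `ℝ` whose jumps all lie in the set `T`. -/
def pcAlgOn (T : Set ℝ) : Subalgebra ℂ (ℝ → ℂ) where
  carrier := {h | ∀ x y : ℝ, x ∉ T → y ∉ T →
    (∀ u ∈ T, u ∉ Set.Icc (min x y) (max x y)) → h x = h y}
  mul_mem' := by
    intro a b ha hb x y hx hy hxy
    simp only [Pi.mul_apply, ha x y hx hy hxy, hb x y hx hy hxy]
  add_mem' := by
    intro a b ha hb x y hx hy hxy
    simp only [Pi.add_apply, ha x y hx hy hxy, hb x y hx hy hxy]
  algebraMap_mem' := by intro r x y _ _ _; rfl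

/-- Invariance of an algebra of functions under a self-map of `X`. -/
def AlgInvariant {X : Type*} (A : Subalgebra ℂ (X → ℂ)) (σ : X → X) : Prop :=
  ∀ h ∈ A, (h ∘ σ) ∈ A

/-- `Sep A σ n = {x | ∃ h ∈ A, h x ≠ σ̃ⁿ(h) x}`, where `σ̃ⁿ(h) = h ∘ σ⁻ⁿ`. -/
def Sep {X : Type*} (A : Subalgebra ℂ (X → ℂ)) (σ : Equiv.Perm X) (n : ℤ) : Set X :=
  {x | ∃ h ∈ A, h x ≠ h ((σ ^ n)⁻¹ x)}

/-- Twisted convolution product on the crossed product `⋊ ℤ`: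
`(fₙ δⁿ) * (gₘ δᵐ) = fₙ · σ̃ⁿ(gₘ) · δ^{n+m}` extended bilinearly. -/
def cmul {X : Type*} (σ : Equiv.Perm X) (f g : ℤ →₀ (X → ℂ)) : ℤ →₀ (X → ℂ) :=
  f.sum fun n a => g.sum fun m b =>
    Finsupp.single (n + m) (fun x => a x * b ((σ ^ n)⁻¹ x))

/-- Membership of an element `Σ fₙ δⁿ` in the crossed product of the algebra `B` with `ℤ`. -/
def InCrossed {X : Type*} (B : Subalgebra ℂ (X → ℂ)) (f : ℤ →₀ (X → ℂ)) : Prop :=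
  ∀ n, f n ∈ B

/-- The commutant of `A` inside the crossed product `B ⋊ ℤ` (where `A ⊆ B`). -/
def commutant {X : Type*} (A B : Subalgebra ℂ (X → ℂ)) (σ : Equiv.Perm X) :
    Set (ℤ →₀ (X → ℂ)) :=
  {f | InCrossed B f ∧
    ∀ a ∈ A, cmul σ f (Finsupp.single 0 a) = cmul σ (Finsupp.single 0 a) f}

/-- The jump points `t₁ < ⋯ < t_N` extended by `t₀ = -∞` and `t_{N+1} = +∞`. -/
def tE (N : ℕ) (t : Fin N → ℝ) (i : ℕ) : EReal :=
  if h : 1 ≤ i ∧ i ≤ N then ((t ⟨i - 1, by omega⟩ : ℝ) : EReal)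
  else if i = 0 then ⊥ else ⊤

/-- The open interval `I_i = (t_i, t_{i+1})` for `0 ≤ i ≤ N`. -/
def openPiece (N : ℕ) (t : Fin N → ℝ) (i : ℕ) : Set ℝ :=
  {x : ℝ | tE N t i < (x : EReal) ∧ (x : EReal) < tE N t (i + 1)}

/-- The sets of the partition of `ℝ` determined by the jump points: the open
intervals `I_0, …, I_N` together with the singletons `{t_i}`. -/
def pieces (N : ℕ) (t : Fin N → ℝ) : Set (Set ℝ) :=
  {P | (∃ i : ℕ, i ≤ N ∧ P = openPiece N t i) ∨ (∃ i : Fin N, P = {t i})}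

/-- `C_k`: points `x` such that `k` is the smallest positive integer with `x` and
`σᵏ(x)` in one common set of the partition. -/
def Ck (N : ℕ) (t : Fin N → ℝ) (σ : Equiv.Perm ℝ) (k : ℕ) : Set ℝ :=
  {x | IsLeast {j : ℕ | 0 < j ∧ ∃ P ∈ pieces N t, x ∈ P ∧ (σ ^ j) x ∈ P} k}

end PaperTRS
namespace PaperTRS

/-- With `p` points `s i 0 < ⋯ < s i (p-1)` added in the interval `I_{α i}`, the `j`-th
open subinterval of the refined partition of `I_{α i}`, for `j = 0, …, p`. -/
def subPiece (N : ℕ) (t : Fin N → ℝ) {k p : ℕ} (α : Fin k → ℕ)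
    (s : Fin k → Fin p → ℝ) (i : Fin k) (j : Fin (p + 1)) : Set ℝ :=
  {x : ℝ |
    (if hj : (j : ℕ) = 0 then tE N t (α i)
      else ((s i ⟨(j : ℕ) - 1, by have := j.isLt; omega⟩ : ℝ) : EReal)) < (x : EReal) ∧
    (x : EReal) <
      (if hj : (j : ℕ) = p then tE N t (α i + 1)
        else ((s i ⟨(j : ℕ), by have := j.isLt; omega⟩ : ℝ) : EReal))}

/-- The sets of the refined partition of the union of the intervals `I_{α i}`: the open
subintervals determined by the added jump points together with the singleton jump points. -/
def cyclePieces (N : ℕ) (t : Fin N → ℝ) {k p : ℕ} (α : Fin k → ℕ)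
    (s : Fin k → Fin p → ℝ) : Set (Set ℝ) :=
  {P | (∃ i j, P = subPiece N t α s i j) ∨ (∃ i j, P = ({s i j} : Set ℝ))}

/-- `C̃_r`: points `x` of `⋃ᵢ I_{α i}` such that `r` is the smallest positive integer with
`x` and `σʳ(x)` in one common set of the refined partition. -/
def Ctil (N : ℕ) (t : Fin N → ℝ) (σ : Equiv.Perm ℝ) {k p : ℕ} (α : Fin k → ℕ)
    (s : Fin k → Fin p → ℝ) (r : ℕ) : Set ℝ :=
  {x | x ∈ ⋃ i, openPiece N t (α i) ∧
    IsLeast {j : ℕ | 0 < j ∧ ∃ P ∈ cyclePieces N t α s, x ∈ P ∧ (σ ^ j) x ∈ P} r}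

/-- The cyclic setup: `k` pairwise distinct open intervals `I_{α 0}, …, I_{α (k-1)}` of the
original partition, contained in `C_k` and permuted cyclically by `σ`, with `p` jump points
`s i 0 < ⋯ < s i (p-1)` added into each of them, and both the original algebra `𝒜` and the
refined algebra `𝒜_S` invariant under `σ` and `σ⁻¹`. -/
def CyclicSetup (N : ℕ) (t : Fin N → ℝ) (σ : Equiv.Perm ℝ) {k p : ℕ} (α : Fin k → ℕ)
    (s : Fin k → Fin p → ℝ) : Prop :=
  0 < k ∧ (∀ i, α i ≤ N) ∧ Function.Injective α ∧
  (∀ i j, s i j ∈ openPiece N t (α i)) ∧ (∀ i, StrictMono (s i)) ∧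
  (∀ i : Fin k, ∃ i' : Fin k, ((i' : ℕ) = ((i : ℕ) + 1) % k) ∧
    σ '' openPiece N t (α i) = openPiece N t (α i')) ∧
  (∀ i, openPiece N t (α i) ⊆ Ck N t σ k) ∧
  AlgInvariant (pcAlgOn (Set.range t)) σ ∧
  AlgInvariant (pcAlgOn (Set.range t)) σ.symm ∧
  AlgInvariant (pcAlgOn (Set.range t ∪ ⋃ i, Set.range (s i))) σ ∧
  AlgInvariant (pcAlgOn (Set.range t ∪ ⋃ i, Set.range (s i))) σ.symm

/-- `C_k` for the partition `P` of a general set `X`. -/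
def CkGen {X ι : Type*} (P : ι → Set X) (σ : Equiv.Perm X) (k : ℕ) : Set X :=
  {x | IsLeast {j : ℕ | 0 < j ∧ ∃ i, x ∈ P i ∧ (σ ^ j) x ∈ P i} k}

/-- `C̃_r` relative to a family `Q` of refined pieces inside the subset `base` of `X`. -/
def CtilGen {X ι : Type*} (σ : Equiv.Perm X) (Q : ι → Set X) (base : Set X) (r : ℕ) :
    Set X :=
  {x | x ∈ base ∧ IsLeast {j : ℕ | 0 < j ∧ ∃ i, x ∈ Q i ∧ (σ ^ j) x ∈ Q i} r}

/-- `C_∞`: points that never return to the partition set they lie in. -/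
def Cinf {X ι : Type*} (P : ι → Set X) (σ : Equiv.Perm X) : Set X :=
  {x | ∀ k : ℕ, 0 < k → ¬∃ i, x ∈ P i ∧ (σ ^ k) x ∈ P i}

end PaperTRS
namespace PaperTRS


section AuxLemmas

variable {X : Type*}

lemma sum_single_apply' (f : ℤ →₀ (X → ℂ)) (g : ℤ → (X → ℂ) → (X → ℂ))
    (h0 : ∀ n, g n 0 = 0) (m : ℤ) :
    (f.sum fun n a => Finsupp.single n (g n a)) m = g m (f m) := by
  classical
  rw [Finsupp.sum_apply]
  simp only [Finsupp.single_apply]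
  rw [Finsupp.sum_ite_eq']
  split
  · rfl
  · next h => rw [Finsupp.notMem_support_iff.mp h, h0]

lemma cmul_single_right' (σ : Equiv.Perm X) (f : ℤ →₀ (X → ℂ)) (a : X → ℂ) (m : ℤ) :
    cmul σ f (Finsupp.single 0 a) m = fun x => f m x * a ((σ ^ m)⁻¹ x) := by
  unfold cmul
  have key : ∀ n : ℤ, ∀ fn : X → ℂ,
      ((Finsupp.single (0:ℤ) a).sum fun m b =>
        Finsupp.single (n + m) (fun x => fn x * b ((σ ^ n)⁻¹ x))) =
      Finsupp.single n (fun x => fn x * a ((σ ^ n)⁻¹ x)) := by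
    intro n fn
    rw [Finsupp.sum_single_index]
    · rw [add_zero]
    · have h0 : (fun x => fn x * (0:X→ℂ) ((σ ^ n)⁻¹ x)) = 0 := by
        funext x; simp only [Pi.zero_apply, mul_zero]
      rw [h0, Finsupp.single_zero]
  simp only [key]
  refine sum_single_apply' f _ ?_ m
  intro n
  funext x; simp only [Pi.zero_apply, zero_mul]

lemma cmul_single_left' (σ : Equiv.Perm X) (f : ℤ →₀ (X → ℂ)) (a : X → ℂ) (m : ℤ) :
    cmul σ (Finsupp.single 0 a) f m = fun x => a x * f m x := by
  unfold cmul
  rw [Finsupp.sum_single_index]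
  · have := sum_single_apply' f (fun n fn => (fun x => a x * fn ((σ ^ (0:ℤ))⁻¹ x)))
      (by intro n; funext x; simp only [Pi.zero_apply, mul_zero]) m
    simp only [zero_add]
    simp only [zpow_zero, inv_one, Equiv.Perm.coe_one, id_eq] at this ⊢
    exact this
  · have h0 : ∀ m' : ℤ, ∀ fm : X → ℂ, Finsupp.single ((0:ℤ) + m')
        (fun x => (0:X→ℂ) x * fm ((σ ^ (0:ℤ))⁻¹ x)) = 0 := by
      intro m' fm
      have : (fun x => (0:X→ℂ) x * fm ((σ ^ (0:ℤ))⁻¹ x)) = 0 := by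
        funext x; simp only [Pi.zero_apply, zero_mul]
      rw [this, Finsupp.single_zero]
    simp only [h0]
    exact Finset.sum_const_zero

lemma mem_commutant_iff' (A B : Subalgebra ℂ (X → ℂ)) (σ : Equiv.Perm X)
    (f : ℤ →₀ (X → ℂ)) :
    f ∈ commutant A B σ ↔ InCrossed B f ∧
      ∀ n : ℤ, ∀ x : X, f n x ≠ 0 → ∀ a ∈ A, a ((σ ^ n)⁻¹ x) = a x := by
  unfold commutant
  rw [Set.mem_setOf_eq, and_congr_right_iff]
  intro _
  constructor
  · intro h n x hf a ha
    have h1 := congrFun (congrArg (fun F : ℤ →₀ (X → ℂ) => (F n : X → ℂ)) (h a ha)) x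
    rw [cmul_single_right', cmul_single_left'] at h1
    simp only at h1
    have h2 : f n x * a ((σ ^ n)⁻¹ x) = f n x * a x := by rw [h1]; ring
    exact mul_left_cancel₀ hf h2
  · intro h a ha
    ext n x
    rw [cmul_single_right', cmul_single_left']
    by_cases hf : f n x = 0
    · simp only [hf, zero_mul, mul_zero]
    · simp only [h n x hf a ha]; ring

variable {J : Type*}

/-- `x` and `y` lie in one common set of the family `T`. -/
def relp (T : J → Set X) (x y : X) : Prop := ∃ i, x ∈ T i ∧ y ∈ T i

lemma relp_refl {T : J → Set X} (hcover : ⋃ i, T i = Set.univ) (x : X) : relp T x x := by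
  have : x ∈ ⋃ i, T i := hcover ▸ Set.mem_univ x
  rcases Set.mem_iUnion.mp this with ⟨i, hi⟩
  exact ⟨i, hi, hi⟩

lemma relp_symm {T : J → Set X} {x y : X} (h : relp T x y) : relp T y x := by
  rcases h with ⟨i, h1, h2⟩; exact ⟨i, h2, h1⟩

lemma relp_trans {T : J → Set X} (hdisj : ∀ i j, i ≠ j → Disjoint (T i) (T j))
    {x y z : X} (h : relp T x y) (h' : relp T y z) : relp T x z := by
  rcases h with ⟨i, h1, h2⟩; rcases h' with ⟨j, h3, h4⟩
  have : i = j := by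
    by_contra hne
    exact Set.disjoint_left.mp (hdisj i j hne) h2 h3
  exact ⟨i, h1, this ▸ h4⟩

lemma indicator_mem' {T : J → Set X} (hdisj : ∀ i j, i ≠ j → Disjoint (T i) (T j))
    (i : J) : (fun z => if z ∈ T i then (1:ℂ) else 0) ∈ partAlg T := by
  intro j u hu v hv
  by_cases hji : j = i
  · subst hji; simp only [if_pos hu, if_pos hv]
  · have hu' : u ∉ T i := fun hu' => Set.disjoint_left.mp (hdisj j i hji) hu hu'
    have hv' : v ∉ T i := fun hv' => Set.disjoint_left.mp (hdisj j i hji) hv hv'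
    simp only [if_neg hu', if_neg hv']

lemma forall_eq_iff_relp {T : J → Set X} (hdisj : ∀ i j, i ≠ j → Disjoint (T i) (T j))
    (hcover : ⋃ i, T i = Set.univ) (x y : X) :
    (∀ a ∈ partAlg T, a x = a y) ↔ relp T x y := by
  constructor
  · intro h
    rcases relp_refl hcover x with ⟨i, hi, -⟩
    have h1 := h _ (indicator_mem' hdisj i)
    rw [if_pos hi] at h1
    refine ⟨i, hi, ?_⟩
    by_contra hy
    rw [if_neg hy] at h1
    exact one_ne_zero h1
  · rintro ⟨i, hx, hy⟩ a ha
    exact ha i x hx y hy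

lemma relp_map {T : J → Set X} (hdisj : ∀ i j, i ≠ j → Disjoint (T i) (T j))
    (hcover : ⋃ i, T i = Set.univ) {σ : X → X}
    (hinv : AlgInvariant (partAlg T) σ) {x y : X} (h : relp T x y) :
    relp T (σ x) (σ y) := by
  rw [← forall_eq_iff_relp hdisj hcover]
  intro a ha
  exact (forall_eq_iff_relp hdisj hcover x y).mpr h (a ∘ σ) (hinv a ha)

lemma relp_zpow {T : J → Set X} (hdisj : ∀ i j, i ≠ j → Disjoint (T i) (T j))
    (hcover : ⋃ i, T i = Set.univ) {σ : Equiv.Perm X}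
    (h1 : AlgInvariant (partAlg T) σ) (h2 : AlgInvariant (partAlg T) σ.symm)
    (n : ℤ) {x y : X} (h : relp T x y) : relp T ((σ ^ n) x) ((σ ^ n) y) := by
  induction n using Int.induction_on with
  | zero => simpa using h
  | succ m ih =>
      have h' := relp_map hdisj hcover h1 ih
      have e : ∀ z : X, (σ ^ ((m:ℤ) + 1)) z = σ ((σ ^ (m:ℤ)) z) := by
        intro z
        have h'' : σ ^ ((m:ℤ) + 1) = σ * σ ^ (m:ℤ) := by
          rw [add_comm, zpow_one_add]
        rw [h'', Equiv.Perm.mul_apply]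
      rw [e, e]
      exact h'
  | pred m ih =>
      have h' := relp_map hdisj hcover h2 ih
      have e : ∀ z : X, (σ ^ (-(m:ℤ) - 1)) z = σ.symm ((σ ^ (-(m:ℤ))) z) := by
        intro z
        have h'' : σ ^ (-(m:ℤ) - 1) = σ⁻¹ * σ ^ (-(m:ℤ)) := by
          rw [← zpow_neg_one, ← zpow_add]; ring_nf
        rw [h'', Equiv.Perm.mul_apply]; rfl
      rw [e, e]
      exact h'

/-- The subgroup of return times of `x` relative to the partition `T`. -/
def Sgp (T : J → Set X) (hdisj : ∀ i j, i ≠ j → Disjoint (T i) (T j))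
    (hcover : ⋃ i, T i = Set.univ) (σ : Equiv.Perm X)
    (h1 : AlgInvariant (partAlg T) σ) (h2 : AlgInvariant (partAlg T) σ.symm)
    (x : X) : AddSubgroup ℤ where
  carrier := {n | relp T ((σ ^ n) x) x}
  zero_mem' := by simpa using relp_refl hcover x
  add_mem' := by
    intro a b ha hb
    have h' : relp T ((σ ^ a) ((σ ^ b) x)) ((σ ^ a) x) := relp_zpow hdisj hcover h1 h2 a hb
    have e : (σ ^ (a + b)) x = (σ ^ a) ((σ ^ b) x) := by
      rw [zpow_add, Equiv.Perm.mul_apply]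
    show relp T ((σ ^ (a + b)) x) x
    rw [e]
    exact relp_trans hdisj h' ha
  neg_mem' := by
    intro a ha
    have h' : relp T ((σ ^ (-a)) ((σ ^ a) x)) ((σ ^ (-a)) x) :=
      relp_zpow hdisj hcover h1 h2 (-a) ha
    have e : (σ ^ (-a)) ((σ ^ a) x) = x := by
      rw [← Equiv.Perm.mul_apply, ← zpow_add]; simp
    rw [e] at h'
    exact relp_symm h'

lemma mem_Sgp_iff {T : J → Set X} {hdisj : ∀ i j, i ≠ j → Disjoint (T i) (T j)}
    {hcover : ⋃ i, T i = Set.univ} {σ : Equiv.Perm X}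
    {h1 : AlgInvariant (partAlg T) σ} {h2 : AlgInvariant (partAlg T) σ.symm}
    {x : X} {n : ℤ} :
    n ∈ Sgp T hdisj hcover σ h1 h2 x ↔ relp T ((σ ^ n) x) x := Iff.rfl

lemma least_dvd (H : AddSubgroup ℤ) (m : ℤ) (hm : 0 < m) (hmH : m ∈ H)
    (hleast : ∀ n ∈ H, 0 < n → m ≤ n) : ∀ n ∈ H, m ∣ n := by
  intro n hn
  have h1 : n % m ∈ H := by
    have h' := H.sub_mem hn (H.zsmul_mem hmH (n / m))
    have e : n - (n / m) • m = n % m := by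
      rw [Int.emod_def]; push_cast [smul_eq_mul]; ring
    rwa [e] at h'
  have h2 : 0 ≤ n % m := Int.emod_nonneg n hm.ne'
  have h3 : n % m < m := Int.emod_lt_of_pos n hm
  rcases h2.eq_or_lt with h | h
  · exact Int.dvd_of_emod_eq_zero h.symm
  · exact absurd (hleast _ h1 h) (not_le.mpr h3)

lemma natLeast_dvd (H : AddSubgroup ℤ) (m : ℕ)
    (h : IsLeast {j : ℕ | 0 < j ∧ (j:ℤ) ∈ H} m) : ∀ n ∈ H, (m:ℤ) ∣ n := by
  obtain ⟨⟨hm0, hmH⟩, hle⟩ := h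
  refine least_dvd H m (by exact_mod_cast hm0) hmH ?_
  intro n hn hn0
  have h1 : n.toNat ∈ {j : ℕ | 0 < j ∧ (j:ℤ) ∈ H} := by
    constructor
    · omega
    · rwa [Int.toNat_of_nonneg hn0.le]
  have := hle h1
  omega

lemma div_dvd_helper {k : ℤ} (hk : k ≠ 0) (l n : ℤ) (hkn : k ∣ n) :
    l ∣ n / k ↔ k * l ∣ n := by
  obtain ⟨c, rfl⟩ := hkn
  rw [Int.mul_ediv_cancel_left _ hk]
  constructor
  · rintro ⟨q, rfl⟩; exact ⟨q, by ring⟩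
  · rintro ⟨q, hq⟩
    refine ⟨q, ?_⟩
    have : k * c = k * (l * q) := by rw [hq]; ring
    exact mul_left_cancel₀ hk this

end AuxLemmas

/-- partition sets `X_{ι 0}, …, X_{ι (k-1)} ⊆ C_k` are permuted cyclically by
`σ` and each is refined into `s` nonempty disjoint subsets `Q i r`; with `𝒜` and `𝒜_S`
invariant under `σ` and `σ⁻¹`, the commutants in `𝒜_S ⋊_σ̃ ℤ` satisfy
`𝒜_S' = 𝒜' \ {Σ fₙδⁿ : fₙ ≢ 0 on C̃_{k·l} for some n, l with k ∣ n and l ∤ n/k}`. -/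
theorem statement15 {X J : Type*} [Countable J] (P : J → Set X)
    (hne : ∀ i, (P i).Nonempty)
    (hdisj : ∀ i j, i ≠ j → Disjoint (P i) (P j))
    (hcover : ⋃ i, P i = Set.univ)
    (σ : Equiv.Perm X)
    (k s : ℕ) (hk : 0 < k) (ι : Fin k → J) (hι : Function.Injective ι)
    (hsub : ∀ i, P (ι i) ⊆ CkGen P σ k)
    (hcyc : ∀ i : Fin k, ∃ i' : Fin k, ((i' : ℕ) = ((i : ℕ) + 1) % k) ∧
      σ '' P (ι i) = P (ι i'))
    (Q : Fin k → Fin s → Set X)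
    (hQne : ∀ i r, (Q i r).Nonempty)
    (hQdisj : ∀ i, ∀ r r' : Fin s, r ≠ r' → Disjoint (Q i r) (Q i r'))
    (hQcover : ∀ i, ⋃ r, Q i r = P (ι i))
    (h1 : AlgInvariant (partAlg P) σ)
    (h2 : AlgInvariant (partAlg P) σ.symm)
    (h3 : AlgInvariant (partAlg (Sum.elim
      (fun j : {j : J // j ∉ Set.range ι} => P j.1)
      (fun q : Fin k × Fin s => Q q.1 q.2))) σ)
    (h4 : AlgInvariant (partAlg (Sum.elim
      (fun j : {j : J // j ∉ Set.range ι} => P j.1)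
      (fun q : Fin k × Fin s => Q q.1 q.2))) σ.symm) :
    commutant (partAlg (Sum.elim
        (fun j : {j : J // j ∉ Set.range ι} => P j.1)
        (fun q : Fin k × Fin s => Q q.1 q.2)))
      (partAlg (Sum.elim
        (fun j : {j : J // j ∉ Set.range ι} => P j.1)
        (fun q : Fin k × Fin s => Q q.1 q.2))) σ =
    commutant (partAlg P)
        (partAlg (Sum.elim
          (fun j : {j : J // j ∉ Set.range ι} => P j.1)
          (fun q : Fin k × Fin s => Q q.1 q.2))) σ \
      {f : ℤ →₀ (X → ℂ) | ∃ n : ℤ, ∃ l : ℕ, 1 ≤ l ∧ l ≤ s ∧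
        (k : ℤ) ∣ n ∧ ¬((l : ℤ) ∣ n / (k : ℤ)) ∧
        ¬(∀ x ∈ CtilGen σ (fun q : Fin k × Fin s => Q q.1 q.2)
            (⋃ i, P (ι i)) (k * l), f n x = 0)} := by
  classical
  set Pp : ({j : J // j ∉ Set.range ι} ⊕ Fin k × Fin s) → Set X :=
    Sum.elim (fun j : {j : J // j ∉ Set.range ι} => P j.1)
      (fun q : Fin k × Fin s => Q q.1 q.2) with hPp
  -- basic facts about the refined partition
  have hQsub : ∀ i r, Q i r ⊆ P (ι i) := by
    intro i r
    rw [← hQcover i]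
    exact Set.subset_iUnion _ r
  have hP'disj : ∀ i j, i ≠ j → Disjoint (Pp i) (Pp j) := by
    rintro (⟨j1, hj1⟩ | ⟨i1, r1⟩) (⟨j2, hj2⟩ | ⟨i2, r2⟩) hne
    · refine hdisj _ _ ?_
      intro h
      exact hne (by simp [Subtype.ext h])
    · have h1 : j1 ≠ ι i2 := fun h => hj1 ⟨i2, h.symm⟩
      exact (hdisj _ _ h1).mono_right (hQsub i2 r2)
    · have h1 : ι i1 ≠ j2 := fun h => hj2 ⟨i1, h⟩
      exact ((hdisj _ _ h1).mono_left (hQsub i1 r1))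
    · by_cases hi : i1 = i2
      · subst hi
        have hr : r1 ≠ r2 := fun h => hne (by simp [h])
        exact hQdisj i1 r1 r2 hr
      · exact ((hdisj _ _ (fun h => hi (hι h))).mono (hQsub i1 r1) (hQsub i2 r2))
  have hP'cover : ⋃ i, Pp i = Set.univ := by
    apply Set.eq_univ_of_forall
    intro x
    have hx : x ∈ ⋃ j, P j := hcover ▸ Set.mem_univ x
    obtain ⟨j, hj⟩ := Set.mem_iUnion.mp hx
    by_cases hr : j ∈ Set.range ι
    · obtain ⟨i, rfl⟩ := hr
      have hx2 : x ∈ ⋃ r, Q i r := (hQcover i) ▸ hj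
      obtain ⟨r, hrx⟩ := Set.mem_iUnion.mp hx2
      exact Set.mem_iUnion.mpr ⟨Sum.inr (i, r), hrx⟩
    · exact Set.mem_iUnion.mpr ⟨Sum.inl ⟨j, hr⟩, hj⟩
  have hAle : ∀ a ∈ partAlg P, a ∈ partAlg Pp := by
    intro a ha i'
    rcases i' with ⟨j, hj⟩ | ⟨i, r⟩
    · exact ha j
    · intro u hu v hv
      exact ha (ι i) u (hQsub i r hu) v (hQsub i r hv)
  -- return-time subgroups
  set R : X → AddSubgroup ℤ := fun x => Sgp P hdisj hcover σ h1 h2 x with hR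
  set S : X → AddSubgroup ℤ := fun x => Sgp Pp hP'disj hP'cover σ h3 h4 x with hS
  have hSR : ∀ x : X, ∀ n : ℤ, n ∈ S x → n ∈ R x := by
    intro x n hn
    rcases hn with ⟨⟨j, hj⟩ | ⟨i, r⟩, hu, hv⟩
    · exact ⟨j, hu, hv⟩
    · exact ⟨ι i, hQsub i r hu, hQsub i r hv⟩
  have ecomp : ∀ (u v : ℤ) (z : X), (σ ^ u) ((σ ^ v) z) = (σ ^ (u + v)) z := by
    intro u v z
    rw [← Equiv.Perm.mul_apply, ← zpow_add]
  have hRnat : ∀ x : X, ∀ j : ℕ,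
      ((j : ℤ) ∈ R x ↔ ∃ i, x ∈ P i ∧ (σ ^ j) x ∈ P i) := by
    intro x j
    rw [hR, mem_Sgp_iff, zpow_natCast]
    constructor
    · rintro ⟨i, hu, hv⟩; exact ⟨i, hv, hu⟩
    · rintro ⟨i, hu, hv⟩; exact ⟨i, hv, hu⟩
  have hSnatQ : ∀ x, x ∈ (⋃ i, P (ι i)) → ∀ j : ℕ,
      ((j : ℤ) ∈ S x ↔ ∃ q : Fin k × Fin s, x ∈ Q q.1 q.2 ∧ (σ ^ j) x ∈ Q q.1 q.2) := by
    intro x hx j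
    obtain ⟨i₀, hi₀⟩ := Set.mem_iUnion.mp hx
    have hx2 : x ∈ ⋃ r, Q i₀ r := (hQcover i₀) ▸ hi₀
    obtain ⟨r₀, hr₀⟩ := Set.mem_iUnion.mp hx2
    rw [hS, mem_Sgp_iff, zpow_natCast]
    constructor
    · rintro ⟨⟨j', hj'⟩ | ⟨i, r⟩, hu, hv⟩
      · exfalso
        have h1 : j' ≠ ι i₀ := fun h => hj' ⟨i₀, h.symm⟩
        exact Set.disjoint_left.mp ((hdisj _ _ h1).mono_right (hQsub i₀ r₀)) hv hr₀
      · exact ⟨(i, r), hv, hu⟩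
    · rintro ⟨q, hu, hv⟩
      exact ⟨Sum.inr q, hv, hu⟩
  have hCtilIff : ∀ x : X, ∀ r : ℕ,
      x ∈ CtilGen σ (fun q : Fin k × Fin s => Q q.1 q.2) (⋃ i, P (ι i)) r ↔
        (x ∈ (⋃ i, P (ι i)) ∧ IsLeast {j : ℕ | 0 < j ∧ (j : ℤ) ∈ S x} r) := by
    intro x r
    unfold CtilGen
    rw [Set.mem_setOf_eq, and_congr_right_iff]
    intro hx
    have hset : {j : ℕ | 0 < j ∧ ∃ q : Fin k × Fin s, x ∈ Q q.1 q.2 ∧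
        (σ ^ j) x ∈ Q q.1 q.2} = {j : ℕ | 0 < j ∧ (j : ℤ) ∈ S x} := by
      ext j
      simp only [Set.mem_setOf_eq, hSnatQ x hx j]
    rw [hset]
  have hkmem : ∀ x, x ∈ (⋃ i, P (ι i)) → (k : ℤ) ∈ R x := by
    intro x hx
    obtain ⟨i₀, hi₀⟩ := Set.mem_iUnion.mp hx
    have h' := (hsub i₀ hi₀).1
    exact (hRnat x k).mpr h'.2
  have hkleast : ∀ x, x ∈ (⋃ i, P (ι i)) →
      IsLeast {j : ℕ | 0 < j ∧ (j : ℤ) ∈ R x} k := by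
    intro x hx
    obtain ⟨i₀, hi₀⟩ := Set.mem_iUnion.mp hx
    have h' := hsub i₀ hi₀
    have hset : {j : ℕ | 0 < j ∧ (j : ℤ) ∈ R x} =
        {j : ℕ | 0 < j ∧ ∃ i, x ∈ P i ∧ (σ ^ j) x ∈ P i} := by
      ext j
      simp only [Set.mem_setOf_eq, hRnat x j]
    rw [hset]
    exact h'
  have hRdvd : ∀ x, x ∈ (⋃ i, P (ι i)) → ∀ n ∈ R x, (k : ℤ) ∣ n := by
    intro x hx
    exact natLeast_dvd (R x) k (hkleast x hx)
  -- the structure result: least refined return time is k·l with 1 ≤ l ≤ s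
  have hstruct : ∀ x, x ∈ (⋃ i, P (ι i)) →
      ∃ l : ℕ, 1 ≤ l ∧ l ≤ s ∧ IsLeast {j : ℕ | 0 < j ∧ (j : ℤ) ∈ S x} (k * l) := by
    intro x hx
    obtain ⟨i₀, hi₀⟩ := Set.mem_iUnion.mp hx
    have hQmem : ∀ j : ℕ, ∃ r : Fin s, (σ ^ ((k : ℤ) * j)) x ∈ Q i₀ r := by
      intro j
      have h1 : ((k : ℤ) * j) ∈ R x := by
        have h2 := (R x).zsmul_mem (hkmem x hx) (j : ℤ)
        have h3 : (j : ℤ) • (k : ℤ) = (k : ℤ) * j := by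
          rw [smul_eq_mul]; ring
        rwa [h3] at h2
      rcases h1 with ⟨i, hu, hv⟩
      have hi : i = ι i₀ := by
        by_contra hne
        exact Set.disjoint_left.mp (hdisj i (ι i₀) hne) hv hi₀
      subst hi
      have hu2 : (σ ^ ((k : ℤ) * j)) x ∈ ⋃ r, Q i₀ r := (hQcover i₀) ▸ hu
      exact Set.mem_iUnion.mp hu2
    choose ρ hρ using hQmem
    have hcard : Fintype.card (Fin s) < Fintype.card (Fin (s + 1)) := by
      simp
    obtain ⟨a, b, hab, hfab⟩ :=
      Fintype.exists_ne_map_eq_of_card_lt (fun j : Fin (s + 1) => ρ (j : ℕ)) hcard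
    -- normalize to u < v
    obtain ⟨u, v, huv, hfe⟩ : ∃ u v : ℕ, u < v ∧ v ≤ s ∧ ρ u = ρ v := by
      rcases hab.lt_or_gt with h | h
      · exact ⟨a, b, h, Nat.lt_succ_iff.mp b.isLt, hfab⟩
      · exact ⟨b, a, h, Nat.lt_succ_iff.mp a.isLt, hfab.symm⟩
    obtain ⟨hvs, hfe⟩ := hfe
    -- k·(v-u) is a refined return time
    have hrel : relp Pp ((σ ^ ((k : ℤ) * v)) x) ((σ ^ ((k : ℤ) * u)) x) := by
      refine ⟨Sum.inr (i₀, ρ u), ?_, hρ u⟩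
      show (σ ^ ((k : ℤ) * v)) x ∈ Q i₀ (ρ u)
      rw [hfe]
      exact hρ v
    have hrel2 := relp_zpow hP'disj hP'cover h3 h4 (-((k : ℤ) * u)) hrel
    rw [ecomp, ecomp] at hrel2
    have e1 : -((k : ℤ) * u) + (k : ℤ) * v = (k : ℤ) * ((v : ℤ) - u) := by ring
    have e2 : -((k : ℤ) * u) + (k : ℤ) * u = 0 := by ring
    rw [e1, e2] at hrel2
    simp only [zpow_zero, Equiv.Perm.coe_one, id_eq] at hrel2
    have hSmem : ((k : ℤ) * ((v : ℤ) - u)) ∈ S x := hrel2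
    have hd : ((k * (v - u) : ℕ) : ℤ) ∈ S x := by
      have : ((k * (v - u) : ℕ) : ℤ) = (k : ℤ) * ((v : ℤ) - u) := by
        push_cast [Nat.cast_sub huv.le]; ring
      rw [this]
      exact hSmem
    have hpos : 0 < k * (v - u) := by
      have h0 : 0 < v - u := by omega
      positivity
    have hne'' : ∃ j : ℕ, j ∈ {j : ℕ | 0 < j ∧ (j : ℤ) ∈ S x} := ⟨k * (v - u), hpos, hd⟩
    set m := Nat.find hne'' with hm
    have hmleast : IsLeast {j : ℕ | 0 < j ∧ (j : ℤ) ∈ S x} m :=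
      ⟨Nat.find_spec hne'', fun j hj => Nat.find_min' hne'' hj⟩
    have hmkd : m ≤ k * (v - u) := Nat.find_min' hne'' ⟨hpos, hd⟩
    have hm0 : 0 < m := hmleast.1.1
    have hkdvdm : (k : ℤ) ∣ (m : ℤ) := hRdvd x hx (m : ℤ) (hSR x (m : ℤ) hmleast.1.2)
    have hkdvdm' : k ∣ m := Int.natCast_dvd_natCast.mp hkdvdm
    obtain ⟨l, hl⟩ := hkdvdm'
    refine ⟨l, ?_, ?_, ?_⟩
    · rcases Nat.eq_zero_or_pos l with h0 | h0
      · subst h0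
        rw [Nat.mul_zero] at hl
        omega
      · omega
    · have hms : m ≤ k * s := le_trans hmkd (Nat.mul_le_mul_left k (by omega))
      rw [hl] at hms
      exact Nat.le_of_mul_le_mul_left hms hk
    · rw [← hl]
      exact hmleast
  -- membership in S x from the commutation relation, and conversely
  have hfromS : ∀ (x : X) (n : ℤ), n ∈ S x → ∀ a ∈ partAlg Pp, a ((σ ^ n)⁻¹ x) = a x := by
    intro x n hn a ha
    have h' : (-n) ∈ S x := neg_mem hn
    rw [hS, mem_Sgp_iff, zpow_neg] at h'
    exact (forall_eq_iff_relp hP'disj hP'cover _ x).mpr h' a ha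
  have htoS : ∀ (x : X) (n : ℤ), (∀ a ∈ partAlg Pp, a ((σ ^ n)⁻¹ x) = a x) → n ∈ S x := by
    intro x n h
    have h' : (-n) ∈ S x := by
      rw [hS, mem_Sgp_iff, zpow_neg]
      exact (forall_eq_iff_relp hP'disj hP'cover _ x).mp h
    simpa using neg_mem h'
  have htoR : ∀ (x : X) (n : ℤ), (∀ a ∈ partAlg P, a ((σ ^ n)⁻¹ x) = a x) → n ∈ R x := by
    intro x n h
    have h' : (-n) ∈ R x := by
      rw [hR, mem_Sgp_iff, zpow_neg]
      exact (forall_eq_iff_relp hdisj hcover _ x).mp h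
    simpa using neg_mem h'
  have hk0 : (k : ℤ) ≠ 0 := by exact_mod_cast hk.ne'
  ext f
  simp only [Set.mem_diff, Set.mem_setOf_eq]
  rw [mem_commutant_iff', mem_commutant_iff']
  constructor
  · rintro ⟨hB, hcomm⟩
    refine ⟨⟨hB, ?_⟩, ?_⟩
    · intro n x hf a ha
      exact hcomm n x hf a (hAle a ha)
    · rintro ⟨n, l, hl1, hls, hkn, hln, hnz⟩
      push_neg at hnz
      obtain ⟨x, hxC, hfx⟩ := hnz
      rw [hCtilIff] at hxC
      obtain ⟨hxb, hleast⟩ := hxC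
      have hnS : n ∈ S x := htoS x n (hcomm n x hfx)
      have hdvd : ((k * l : ℕ) : ℤ) ∣ n := natLeast_dvd (S x) (k * l) hleast n hnS
      apply hln
      rw [div_dvd_helper hk0 l n hkn]
      exact_mod_cast hdvd
  · rintro ⟨⟨hB, hcommA⟩, hnbad⟩
    refine ⟨hB, ?_⟩
    intro n x hf
    have hnR : n ∈ R x := htoR x n (hcommA n x hf)
    apply hfromS x n
    by_cases hxb : x ∈ ⋃ i, P (ι i)
    · obtain ⟨l, hl1, hls, hleast⟩ := hstruct x hxb
      have hxC : x ∈ CtilGen σ (fun q : Fin k × Fin s => Q q.1 q.2)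
          (⋃ i, P (ι i)) (k * l) := (hCtilIff x (k * l)).mpr ⟨hxb, hleast⟩
      have hkdvd : (k : ℤ) ∣ n := hRdvd x hxb n hnR
      have hldvd : (l : ℤ) ∣ n / (k : ℤ) := by
        by_contra hcon
        exact hnbad ⟨n, l, hl1, hls, hkdvd, hcon, fun hall => hf (hall x hxC)⟩
      have hkl : ((k * l : ℕ) : ℤ) ∣ n := by
        have := (div_dvd_helper hk0 (l : ℤ) n hkdvd).mp hldvd
        push_cast
        exact this
      obtain ⟨q, hq⟩ := hkl
      have hklS : ((k * l : ℕ) : ℤ) ∈ S x := hleast.1.2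
      have h' := (S x).zsmul_mem hklS q
      rw [smul_eq_mul] at h'
      have : n = q * ((k * l : ℕ) : ℤ) := by rw [hq]; ring
      rwa [← this] at h'
    · -- x lies outside the cycle: the refined piece of x is an original piece
      have hx : x ∈ ⋃ j, P j := hcover ▸ Set.mem_univ x
      obtain ⟨j, hj⟩ := Set.mem_iUnion.mp hx
      have hjr : j ∉ Set.range ι := by
        rintro ⟨i, rfl⟩
        exact hxb (Set.mem_iUnion.mpr ⟨i, hj⟩)
      rcases hnR with ⟨i, hu, hv⟩
      have hij : i = j := by
        by_contra hne
        exact Set.disjoint_left.mp (hdisj i j hne) hv hj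
      subst hij
      exact ⟨Sum.inl ⟨i, hjr⟩, hu, hv⟩


end PaperTRS
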